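/- Let p ≥ 2 and let (G⃗, f) be a (p+2)-coloured orientation of a 2p-regular graph G. Then f is a star colouring of G if and only if every bicoloured component of (G, f) is isomorphic to the star K_{1,p}. -/

import Mathlib

open SimpleGraph

/-- `A` is an orientation of the simple graph `G`. -/
def IsOrientation {V : Type*} (G : SimpleGraph V) (A : V → V → Prop) : Prop :=
  (∀ u v, G.Adj u v ↔ (A u v ∨ A v u)) ∧ ∀ u v, A u v → ¬ A v u

/-- `f` is a proper colouring of `G`. -/
def IsProperColoring {V α : Type*} (G : SimpleGraph V) (f : V → α) : Prop :=
  ∀ ⦃u v⦄, G.Adj u v → f u ≠ f v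

/-- `f` is a star colouring of `G`: a proper colouring with no bicoloured 4-vertex path. -/
def IsStarColoring {V α : Type*} (G : SimpleGraph V) (f : V → α) : Prop :=
  (∀ ⦃u v⦄, G.Adj u v → f u ≠ f v) ∧
    ∀ a b c d, G.Adj a b → G.Adj b c → G.Adj c d →
      a ≠ c → b ≠ d → a ≠ d → ¬(f a = f c ∧ f b = f d)

namespace StarAux
open Finset

lemma exists_ne_of_two_le {α : Type*} {s : Finset α} {x : α} (h : 2 ≤ s.card) :
    ∃ a ∈ s, a ≠ x := by
  obtain ⟨a, ha, b, hb, hab⟩ := Finset.one_lt_card.mp h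
  rcases eq_or_ne a x with rfl | h'
  · exact ⟨b, hb, fun hbx => hab (by rw [hbx])⟩
  · exact ⟨a, ha, h'⟩

variable {V : Type*} [Fintype V] {p : ℕ} (G : SimpleGraph V) [DecidableRel G.Adj]
  (f : V → Fin (p + 2))

/-- number of neighbours of `v` coloured `j` -/
def dd (v : V) (j : Fin (p + 2)) : ℕ := ((G.neighborFinset v).filter fun w => f w = j).card

def big (v : V) : Finset (Fin (p + 2)) := univ.filter fun j => 2 ≤ dd G f v j

def iv (v : V) : ℕ := ((G.neighborFinset v).filter fun w => 2 ≤ dd G f v (f w)).card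

def rr (v : V) : Finset V := (G.neighborFinset v).filter fun w => ¬ 2 ≤ dd G f v (f w)

variable {G f}

lemma one_le_dd {v w : V} (hadj : G.Adj v w) : 1 ≤ dd G f v (f w) := by
  have : w ∈ (G.neighborFinset v).filter fun x => f x = f w :=
    mem_filter.mpr ⟨(G.mem_neighborFinset v w).mpr hadj, rfl⟩
  exact Nat.succ_le_of_lt (card_pos.mpr ⟨w, this⟩)

lemma exists_of_one_le_dd {v : V} {k : Fin (p+2)} (h : 1 ≤ dd G f v k) :
    ∃ w, G.Adj v w ∧ f w = k := by
  obtain ⟨w, hw⟩ := card_pos.mp h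
  obtain ⟨hw1, hw2⟩ := mem_filter.mp hw
  exact ⟨w, (G.mem_neighborFinset v w).mp hw1, hw2⟩

lemma dd_self (hf : IsProperColoring G f) (v : V) : dd G f v (f v) = 0 := by
  rw [dd, Finset.card_eq_zero, Finset.filter_eq_empty_iff]
  intro w hw h
  exact hf ((G.mem_neighborFinset v w).mp hw) (by rw [h])

lemma sum_dd (hreg : G.IsRegularOfDegree (2*p)) (v : V) :
    ∑ j, dd G f v j = 2 * p := by
  unfold dd
  rw [← Finset.card_eq_sum_card_fiberwise (fun x (_ : x ∈ G.neighborFinset v) => mem_univ (f x)),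
    card_neighborFinset_eq_degree]
  exact hreg v

/-- a leaf of a big star has exactly one neighbour of the centre's colour -/
lemma leaf_unique (hstar : IsStarColoring G f) {v w : V} {j : Fin (p+2)}
    (h2 : 2 ≤ dd G f v j) (hadj : G.Adj v w) (hw : f w = j) : dd G f w (f v) = 1 := by
  have hfvj : f v ≠ j := hw ▸ hstar.1 hadj
  refine le_antisymm ?_ (one_le_dd hadj.symm)
  by_contra hgt
  have h2' : 2 ≤ dd G f w (f v) := by omega
  obtain ⟨x, hx, hxv⟩ := exists_ne_of_two_le (x := v) h2'
  obtain ⟨hx1, hx2⟩ := mem_filter.mp hx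
  obtain ⟨u, hu, huw⟩ := exists_ne_of_two_le (x := w) h2
  obtain ⟨hu1, hu2⟩ := mem_filter.mp hu
  exact hstar.2 x w v u ((G.mem_neighborFinset w x).mp hx1).symm hadj.symm
    ((G.mem_neighborFinset v u).mp hu1) hxv huw.symm
    (fun h => hfvj (hx2 ▸ h ▸ hu2)) ⟨hx2, hw.trans hu2.symm⟩

lemma iv_add_rr (hreg : G.IsRegularOfDegree (2*p)) (v : V) :
    iv G f v + (rr G f v).card = 2 * p := by
  rw [iv, rr, card_filter_add_card_filter_not, card_neighborFinset_eq_degree]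
  exact hreg v

lemma card_image_rr (v : V) : ((rr G f v).image f).card = (rr G f v).card := by
  apply card_image_of_injOn
  intro a ha b hb hab
  by_contra hne
  have haN : a ∈ (G.neighborFinset v).filter fun w => f w = f a :=
    mem_filter.mpr ⟨(mem_filter.mp ha).1, rfl⟩
  have hbN : b ∈ (G.neighborFinset v).filter fun w => f w = f a :=
    mem_filter.mpr ⟨(mem_filter.mp hb).1, hab.symm⟩
  have : 2 ≤ dd G f v (f a) := one_lt_card.mpr ⟨a, haN, b, hbN, hne⟩
  exact (mem_filter.mp ha).2 this

lemma image_rr_subset (hf : IsProperColoring G f) (v : V) :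
    (rr G f v).image f ⊆ univ \ (big G f v ∪ {f v}) := by
  intro k hk
  obtain ⟨w, hw, hwk⟩ := mem_image.mp hk
  obtain ⟨hw1, hw2⟩ := mem_filter.mp hw
  rw [mem_sdiff, mem_union, mem_singleton]
  refine ⟨mem_univ _, ?_⟩
  rintro (hbig | hfv)
  · exact hw2 (hwk ▸ (mem_filter.mp hbig).2)
  · exact hf ((G.mem_neighborFinset v w).mp hw1) (hwk.trans hfv).symm

lemma card_target (hf : IsProperColoring G f) (v : V) :
    (univ \ (big G f v ∪ {f v})).card + ((big G f v).card + 1) = p + 2 := by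
  have hdisj : Disjoint (big G f v) ({f v} : Finset (Fin (p+2))) := by
    rw [disjoint_singleton_right]
    intro h
    have := (mem_filter.mp h).2
    rw [dd_self hf] at this
    omega
  have h1 : (big G f v ∪ {f v}).card = (big G f v).card + 1 := by
    rw [card_union_of_disjoint hdisj, card_singleton]
  rw [← h1, card_sdiff_add_card_eq_card (subset_univ _), card_univ]
  simp

lemma big_lower (hp : 2 ≤ p) (hreg : G.IsRegularOfDegree (2*p))
    (hf : IsProperColoring G f) (v : V) : 1 ≤ (big G f v).card := by
  by_contra h
  have hb : big G f v = ∅ := by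
    rw [← Finset.card_eq_zero]; omega
  have h0 : ∀ j, dd G f v j ≤ 1 := by
    intro j
    by_contra hj
    have : j ∈ big G f v := mem_filter.mpr ⟨mem_univ _, by omega⟩
    rw [hb] at this
    exact absurd this (notMem_empty _)
  have hsum := sum_dd (f := f) hreg v
  rw [← Finset.sum_erase_add univ _ (mem_univ (f v)), dd_self hf] at hsum
  have hle := Finset.sum_le_card_nsmul (univ.erase (f v)) (fun j => dd G f v j) 1
    (fun x _ => h0 x)
  rw [card_erase_of_mem (mem_univ _), card_univ] at hle
  simp only [smul_eq_mul, mul_one, Fintype.card_fin] at hle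
  omega

lemma L5a (hreg : G.IsRegularOfDegree (2*p)) (hf : IsProperColoring G f) (v : V) :
    2 * p + (big G f v).card ≤ iv G f v + (p + 1) := by
  have h1 := iv_add_rr (f := f) hreg v
  have h2 := card_image_rr (G := G) (f := f) v
  have h3 := card_le_card (image_rr_subset hf v)
  have h4 := card_target hf v
  omega

variable (G f) in
def Ap : Finset (V × V) := univ.filter fun e => G.Adj e.1 e.2 ∧ 2 ≤ dd G f e.1 (f e.2)

variable (G) in
def Adjp : Finset (V × V) := univ.filter fun e => G.Adj e.1 e.2

lemma card_Ap [DecidableEq V] : (Ap G f).card = ∑ v, iv G f v := by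
  rw [Finset.card_eq_sum_card_fiberwise
    (fun (e : V × V) (_ : e ∈ Ap G f) => mem_univ e.1)]
  refine Finset.sum_congr rfl fun v _ => ?_
  refine Finset.card_nbij Prod.snd ?_ ?_ ?_
  · rintro ⟨a, b⟩ he
    rw [mem_coe, mem_filter] at he
    obtain ⟨he1, he2⟩ := he
    obtain ⟨hadj, hdd⟩ := (mem_filter.mp he1).2
    simp only at he2
    subst he2
    exact mem_filter.mpr ⟨(G.mem_neighborFinset a b).mpr hadj, hdd⟩
  · rintro ⟨a, b⟩ ha ⟨c, d⟩ hc h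
    simp only [Finset.coe_filter, Set.mem_setOf_eq] at ha hc
    simp only at h
    rw [Prod.ext_iff]
    exact ⟨ha.2.trans hc.2.symm, h⟩
  · intro w hw
    simp only [Finset.coe_filter, Set.mem_setOf_eq, mem_filter] at hw
    refine ⟨(v, w), ?_, rfl⟩
    simp only [Finset.coe_filter, Set.mem_setOf_eq, mem_filter, Ap, mem_univ, true_and]
    exact ⟨⟨(G.mem_neighborFinset v w).mp hw.1, hw.2⟩, trivial⟩

lemma card_Adjp [DecidableEq V] (hreg : G.IsRegularOfDegree (2*p)) :
    (Adjp G).card = Fintype.card V * (2 * p) := by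
  rw [Finset.card_eq_sum_card_fiberwise
    (fun (e : V × V) (_ : e ∈ Adjp G) => mem_univ e.1)]
  have : ∀ v : V, ((Adjp G).filter fun e => e.1 = v).card = 2 * p := by
    intro v
    have hc : ((Adjp G).filter fun e => e.1 = v).card = (G.neighborFinset v).card := by
      refine Finset.card_nbij Prod.snd ?_ ?_ ?_
      · rintro ⟨a, b⟩ he
        rw [mem_coe, mem_filter] at he
        obtain ⟨he1, he2⟩ := he
        simp only at he2
        subst he2
        exact (G.mem_neighborFinset a b).mpr (mem_filter.mp he1).2
      · rintro ⟨a, b⟩ ha ⟨c, d⟩ hc h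
        simp only [Finset.coe_filter, Set.mem_setOf_eq] at ha hc
        simp only at h
        rw [Prod.ext_iff]
        exact ⟨ha.2.trans hc.2.symm, h⟩
      · intro w hw
        simp only [mem_coe, mem_neighborFinset] at hw
        refine ⟨(v, w), ?_, rfl⟩
        simp only [Finset.coe_filter, Set.mem_setOf_eq, mem_filter, Adjp, mem_univ, true_and]
        exact ⟨hw, trivial⟩
    rw [hc, card_neighborFinset_eq_degree]
    exact hreg v
  rw [Finset.sum_congr rfl fun v _ => this v, Finset.sum_const, card_univ, smul_eq_mul]

lemma key [DecidableEq V] (hp : 2 ≤ p) (hreg : G.IsRegularOfDegree (2*p))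
    (hstar : IsStarColoring G f) :
    (∀ v k, k ≠ f v → 1 ≤ dd G f v k) ∧
    (∀ v j, 2 ≤ dd G f v j → dd G f v j = p) ∧
    (∀ v w, G.Adj v w → dd G f v (f w) = p ∨ dd G f w (f v) = p) := by
  have hf : IsProperColoring G f := hstar.1
  set A := Ap G f with hA
  set A' := A.image Prod.swap with hA'
  have hswap : ∀ e : V × V, e ∈ A' ↔ (e.2, e.1) ∈ A := by
    intro e
    rw [hA', Finset.mem_image]
    constructor
    · rintro ⟨e', he', rfl⟩
      simpa using he'
    · intro h
      exact ⟨(e.2, e.1), h, rfl⟩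
  have hdisj : Disjoint A A' := by
    rw [Finset.disjoint_left]
    intro e he he'
    rw [hswap] at he'
    obtain ⟨hadj, hdd⟩ := (mem_filter.mp he).2
    obtain ⟨hadj', hdd'⟩ := (mem_filter.mp he').2
    have hdd'2 : 2 ≤ dd G f e.2 (f e.1) := hdd'
    have := leaf_unique hstar hdd hadj rfl
    omega
  have hsub : A ∪ A' ⊆ Adjp G := by
    intro e he
    rcases Finset.mem_union.mp he with h | h
    · exact mem_filter.mpr ⟨mem_univ _, (mem_filter.mp h).2.1⟩
    · rw [hswap] at h
      exact mem_filter.mpr ⟨mem_univ _, (mem_filter.mp h).2.1.symm⟩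
  have hcardA' : A'.card = A.card := Finset.card_image_of_injective _ Prod.swap_injective
  have hcard2 : 2 * A.card ≤ (Adjp G).card := by
    have := card_le_card hsub
    rw [card_union_of_disjoint hdisj, hcardA'] at this
    omega
  have hAdjp := card_Adjp (G := G) hreg
  have hAcard := card_Ap (G := G) (f := f)
  rw [← hA] at hAcard
  have h2e : Fintype.card V * (2 * p) = 2 * (Fintype.card V * p) := by ring
  -- pointwise lower bound
  have hlow : ∀ v : V, p ≤ iv G f v := by
    intro v
    have := L5a hreg hf v
    have := big_lower hp hreg hf v
    omega
  have hAup : A.card ≤ Fintype.card V * p := by omega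
  have hsumlow : Fintype.card V * p ≤ ∑ v, iv G f v := by
    calc Fintype.card V * p = ∑ _v : V, p := by rw [Finset.sum_const, card_univ, smul_eq_mul]
    _ ≤ ∑ v, iv G f v := Finset.sum_le_sum fun v _ => hlow v
  have hiv : ∀ v, iv G f v = p := by
    intro v
    by_contra h
    have hlt : p < iv G f v := lt_of_le_of_ne (hlow v) (Ne.symm h)
    have : (∑ _v : V, p) < ∑ v, iv G f v :=
      Finset.sum_lt_sum (fun i _ => hlow i) ⟨v, mem_univ v, hlt⟩
    rw [Finset.sum_const, card_univ, smul_eq_mul] at this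
    omega
  have hbig1 : ∀ v, (big G f v).card = 1 := by
    intro v
    have h5 := L5a hreg hf v
    have := big_lower hp hreg hf v
    rw [hiv v] at h5
    omega
  -- (iv) : big colours have exactly p neighbours
  have hbigp : ∀ v j, 2 ≤ dd G f v j → dd G f v j = p := by
    intro v j hj
    have hjb : j ∈ big G f v := mem_filter.mpr ⟨mem_univ _, hj⟩
    obtain ⟨a, ha⟩ := Finset.card_eq_one.mp (hbig1 v)
    have haj : a = j := by rw [ha] at hjb; exact (mem_singleton.mp hjb).symm
    subst haj
    have : (G.neighborFinset v).filter (fun w => 2 ≤ dd G f v (f w))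
        = (G.neighborFinset v).filter (fun w => f w = a) := by
      apply Finset.filter_congr
      intro w _
      constructor
      · intro h2
        have : f w ∈ big G f v := mem_filter.mpr ⟨mem_univ _, h2⟩
        rw [ha] at this
        simpa using this
      · intro h; rw [h]; exact hj
    have hiveq : iv G f v = dd G f v a := by unfold iv; rw [this]; rfl
    rw [← hiveq]
    exact hiv v
  refine ⟨?_, hbigp, ?_⟩
  · -- every other colour appears at least once
    intro v k hk
    by_cases h2 : 2 ≤ dd G f v k
    · omega
    have hrrcard : (rr G f v).card = p := by
      have := iv_add_rr (f := f) hreg v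
      rw [hiv v] at this
      omega
    have htar : ((rr G f v).image f).card = (univ \ (big G f v ∪ {f v})).card := by
      have h4 := card_target hf v
      have h5 := hbig1 v
      rw [card_image_rr, hrrcard]
      omega
    have heq : (rr G f v).image f = univ \ (big G f v ∪ {f v}) :=
      Finset.eq_of_subset_of_card_le (image_rr_subset hf v) (le_of_eq htar.symm)
    have hkmem : k ∈ univ \ (big G f v ∪ {f v}) := by
      rw [mem_sdiff, mem_union, mem_singleton]
      refine ⟨mem_univ _, ?_⟩
      rintro (hb | hfv)
      · exact h2 (mem_filter.mp hb).2
      · exact hk hfv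
    rw [← heq] at hkmem
    obtain ⟨w, hw, hwk⟩ := mem_image.mp hkmem
    have hwN := (mem_filter.mp hw).1
    refine Nat.succ_le_of_lt (card_pos.mpr ⟨w, ?_⟩)
    exact mem_filter.mpr ⟨hwN, hwk⟩
  · -- edge dichotomy
    intro v w hadj
    have hAll : Adjp G = A ∪ A' := by
      refine (Finset.eq_of_subset_of_card_le hsub ?_).symm
      rw [card_union_of_disjoint hdisj, hcardA']
      have : A.card = Fintype.card V * p := by
        rw [hAcard]
        calc ∑ v, iv G f v = ∑ _v : V, p := Finset.sum_congr rfl fun v _ => hiv v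
        _ = Fintype.card V * p := by rw [Finset.sum_const, card_univ, smul_eq_mul]
      omega
    have hmem : (v, w) ∈ Adjp G := mem_filter.mpr ⟨mem_univ _, hadj⟩
    rw [hAll] at hmem
    rcases Finset.mem_union.mp hmem with h | h
    · exact Or.inl (hbigp v (f w) (mem_filter.mp h).2.2)
    · rw [hswap] at h
      exact Or.inr (hbigp w (f v) (mem_filter.mp h).2.2)

lemma walk_closed {V' : Type*} {H : SimpleGraph V'} {T : V' → Prop}
    (hT : ∀ a b, T a → H.Adj a b → T b) :
    ∀ {a b : V'}, H.Walk a b → T a → T b := by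
  intro a b w
  induction w with
  | nil => exact id
  | cons h _ ih => exact fun ha => ih (hT _ _ ha h)

lemma comp_iso (hp : 2 ≤ p)
    (hf : IsProperColoring G f)
    (h1 : ∀ v k, k ≠ f v → 1 ≤ dd G f v k)
    (h3 : ∀ v j, 2 ≤ dd G f v j → dd G f v j = p)
    (h4 : ∀ v (j : Fin (p+2)) w, 2 ≤ dd G f v j → G.Adj v w → f w = j → dd G f w (f v) = 1)
    (h2 : ∀ v w, G.Adj v w → dd G f v (f w) = p ∨ dd G f w (f v) = p)
    (i j : Fin (p+2)) (hij : i ≠ j) (S : Set V)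
    (hmemS : ∀ y : V, y ∈ S ↔ (f y = i ∨ f y = j))
    (C : (G.induce S).ConnectedComponent) :
    Nonempty ((G.induce S).induce C.supp ≃g
      completeBipartiteGraph (Fin 1) (Fin p)) := by
  classical
  -- the "other colour" bookkeeping
  have keyA : ∀ x : V, x ∈ S → ∃ oc, oc ≠ f x ∧ (∀ y, y ∈ S ↔ (f y = f x ∨ f y = oc)) := by
    intro x hx
    rcases (hmemS x).mp hx with h | h
    · exact ⟨j, by rw [h]; exact fun e => hij e.symm,
        fun y => by rw [hmemS, h]⟩
    · refine ⟨i, by rw [h]; exact hij,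
        fun y => by rw [hmemS, h, or_comm]⟩
  -- Step A : find the centre of the component
  have stepA : ∃ (u : V) (hu : u ∈ S) (oc : Fin (p+2)),
      (G.induce S).connectedComponentMk ⟨u, hu⟩ = C ∧ oc ≠ f u ∧
      (∀ y, y ∈ S ↔ (f y = f u ∨ f y = oc)) ∧ dd G f u oc = p := by
    obtain ⟨w₀, hw₀⟩ := C.exists_rep
    have hv₀S : (w₀ : V) ∈ S := w₀.2
    obtain ⟨oc, hocne, hcol⟩ := keyA _ hv₀S
    by_cases h2dd : 2 ≤ dd G f (w₀ : V) oc
    · exact ⟨w₀, hv₀S, oc, hw₀, hocne, hcol, h3 _ _ h2dd⟩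
    · have h1dd : 1 ≤ dd G f (w₀ : V) oc := h1 _ _ hocne
      obtain ⟨w, hadj, hwc⟩ := exists_of_one_le_dd h1dd
      have hwp : dd G f w (f (w₀ : V)) = p := by
        rcases h2 _ _ hadj with h | h
        · rw [hwc] at h; omega
        · exact h
      have hwS : w ∈ S := (hcol w).mpr (Or.inr hwc)
      have hadjI : (G.induce S).Adj ⟨w, hwS⟩ w₀ := hadj.symm
      refine ⟨w, hwS, f (w₀ : V),
        (ConnectedComponent.sound hadjI.reachable).trans hw₀,
        fun e => hocne ((e.trans hwc).symm), ?_, hwp⟩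
      intro y
      rw [hcol y, hwc, or_comm]
  obtain ⟨u, huS, oc, hCu, hocne, hcol, hdp⟩ := stepA
  have hfu_oc : f u ≠ oc := fun e => hocne e.symm
  have hdd2 : 2 ≤ dd G f u oc := by omega
  -- Step B : the component is exactly u together with its oc-coloured neighbours
  set T : (↥S) → Prop := fun x => (x : V) = u ∨ (G.Adj u (x : V) ∧ f (x : V) = oc)
    with hT
  have hclosed : ∀ a b : ↥S, T a → (G.induce S).Adj a b → T b := by
    intro a b ha hab
    have hab' : G.Adj (a : V) (b : V) := hab
    rcases ha with ha | ⟨hadj, hcol_a⟩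
    · have hub : G.Adj u (b : V) := ha ▸ hab'
      rcases (hcol _).mp b.2 with h | h
      · exact absurd h.symm (hf hub)
      · exact Or.inr ⟨hub, h⟩
    · have hone := h4 u oc (a : V) hdd2 hadj hcol_a
      rcases (hcol _).mp b.2 with h | h
      · left
        have hu_mem : u ∈ (G.neighborFinset (a : V)).filter (fun w => f w = f u) :=
          Finset.mem_filter.mpr ⟨(G.mem_neighborFinset _ _).mpr hadj.symm, rfl⟩
        have hb_mem : (b : V) ∈ (G.neighborFinset (a : V)).filter (fun w => f w = f u) :=
          Finset.mem_filter.mpr ⟨(G.mem_neighborFinset _ _).mpr hab', h⟩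
        exact Finset.card_le_one.mp (le_of_eq hone) _ hb_mem _ hu_mem
      · exact absurd (hcol_a.trans h.symm) (hf hab')
  have hsupp : ∀ x : ↥S, x ∈ C.supp ↔ T x := by
    intro x
    rw [ConnectedComponent.mem_supp_iff]
    constructor
    · intro hx
      have hreach : (G.induce S).Reachable ⟨u, huS⟩ x :=
        (ConnectedComponent.eq).mp (hCu.trans hx.symm)
      obtain ⟨w⟩ := hreach
      exact walk_closed hclosed w (Or.inl rfl)
    · rintro (h | ⟨hadj, hcolb⟩)
      · have hxu : x = ⟨u, huS⟩ := Subtype.ext h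
        rw [hxu]
        exact hCu
      · have hadjI : (G.induce S).Adj ⟨u, huS⟩ x := hadj
        rw [← hCu]
        exact ConnectedComponent.sound hadjI.symm.reachable
  -- Step C : build the isomorphism
  set L : Finset V := (G.neighborFinset u).filter (fun w => f w = oc) with hL
  have hLcard : Fintype.card ↥L = p := by rw [Fintype.card_coe]; exact hdp
  let eL : ↥L ≃ Fin p := Fintype.equivFinOfCardEq hLcard
  have hmemT : ∀ x : ↥C.supp, T ↑x := fun x => (hsupp _).mp x.2
  have hmemL : ∀ (x : ↥C.supp), ((x : ↥S) : V) ≠ u → ((x : ↥S) : V) ∈ L := by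
    intro x hne
    rcases hmemT x with h | ⟨hadj, hc⟩
    · exact absurd h hne
    · exact Finset.mem_filter.mpr ⟨(G.mem_neighborFinset _ _).mpr hadj, hc⟩
  have huC : (⟨u, huS⟩ : ↥S) ∈ C.supp := (hsupp _).mpr (Or.inl rfl)
  have hLS : ∀ w : V, w ∈ L → w ∈ S := by
    intro w hw
    exact (hcol w).mpr (Or.inr (Finset.mem_filter.mp hw).2)
  have hLC : ∀ (w : V) (hw : w ∈ L), (⟨w, hLS w hw⟩ : ↥S) ∈ C.supp := by
    intro w hw
    exact (hsupp _).mpr (Or.inr ⟨(G.mem_neighborFinset _ _).mp (Finset.mem_filter.mp hw).1,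
      (Finset.mem_filter.mp hw).2⟩)
  set toF : ↥C.supp → (Fin 1 ⊕ Fin p) :=
    fun x => if h : ((x : ↥S) : V) = u then Sum.inl 0 else Sum.inr (eL ⟨_, hmemL x h⟩)
    with htoF
  set invF : (Fin 1 ⊕ Fin p) → ↥C.supp :=
    fun s => Sum.rec (fun _ => ⟨⟨u, huS⟩, huC⟩)
      (fun k => ⟨⟨(eL.symm k : V), hLS _ (eL.symm k).2⟩, hLC _ (eL.symm k).2⟩) s
    with hinvF
  have hLne : ∀ w : ↥L, (w : V) ≠ u := by
    intro w he
    have := (Finset.mem_filter.mp w.2).2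
    rw [he] at this
    exact hfu_oc this
  refine ⟨⟨⟨toF, invF, ?_, ?_⟩, ?_⟩⟩
  · -- left inverse
    intro x
    by_cases h : ((x : ↥S) : V) = u
    · rw [htoF]
      simp only
      rw [dif_pos h, hinvF]
      exact Subtype.ext (Subtype.ext h.symm)
    · rw [htoF]
      simp only
      rw [dif_neg h, hinvF]
      simp only
      apply Subtype.ext
      apply Subtype.ext
      simp only
      rw [Equiv.symm_apply_apply]
  · -- right inverse
    rintro (z | k)
    · have h0 : (0 : Fin 1) = z := Subsingleton.elim _ _
      calc toF (invF (Sum.inl z)) = toF ⟨⟨u, huS⟩, huC⟩ := rfl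
        _ = Sum.inl 0 := dif_pos rfl
        _ = Sum.inl z := by rw [h0]
    · have hne : ((invF (Sum.inr k) : ↥S) : V) ≠ u := hLne (eL.symm k)
      have h2 : toF (invF (Sum.inr k)) = Sum.inr (eL ⟨_, hmemL _ hne⟩) := dif_neg hne
      rw [h2]
      have h3 : (⟨_, hmemL _ hne⟩ : ↥L) = eL.symm k := Subtype.ext rfl
      exact congrArg Sum.inr ((congrArg eL h3).trans (Equiv.apply_symm_apply eL k))
  · -- adjacency
    intro x y
    have hRHS : ((G.induce S).induce C.supp).Adj x y ↔ G.Adj ((x : ↥S) : V) ((y : ↥S) : V) :=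
      Iff.rfl
    rw [hRHS]
    simp only [Equiv.coe_fn_mk]
    by_cases hx : ((x : ↥S) : V) = u <;> by_cases hy : ((y : ↥S) : V) = u
    · have htx : toF x = Sum.inl 0 := dif_pos hx
      have hty : toF y = Sum.inl 0 := dif_pos hy
      rw [htx, hty]
      simp only [completeBipartiteGraph_adj]
      constructor
      · simp
      · intro h
        rw [hx, hy] at h
        exact absurd h (G.irrefl)
    · have htx : toF x = Sum.inl 0 := dif_pos hx
      have hty : toF y = Sum.inr (eL ⟨_, hmemL y hy⟩) := dif_neg hy
      rw [htx, hty]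
      rcases hmemT y with h | ⟨hadj, _⟩
      · exact absurd h hy
      simp only [completeBipartiteGraph_adj]
      constructor
      · intro _
        rw [hx]
        exact hadj
      · intro _
        simp
    · have htx : toF x = Sum.inr (eL ⟨_, hmemL x hx⟩) := dif_neg hx
      have hty : toF y = Sum.inl 0 := dif_pos hy
      rw [htx, hty]
      rcases hmemT x with h | ⟨hadj, _⟩
      · exact absurd h hx
      simp only [completeBipartiteGraph_adj]
      constructor
      · intro _
        rw [hy]
        exact hadj.symm
      · intro _
        simp
    · have htx : toF x = Sum.inr (eL ⟨_, hmemL x hx⟩) := dif_neg hx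
      have hty : toF y = Sum.inr (eL ⟨_, hmemL y hy⟩) := dif_neg hy
      rw [htx, hty]
      rcases hmemT x with h | ⟨_, hcx⟩
      · exact absurd h hx
      rcases hmemT y with h | ⟨_, hcy⟩
      · exact absurd h hy
      simp only [completeBipartiteGraph_adj]
      constructor
      · simp
      · intro h
        exact absurd (hcx.trans hcy.symm) (hf h)

end StarAux

theorem stmt9 {V : Type*} [Fintype V] (p : ℕ) (hp : 2 ≤ p)
    (G : SimpleGraph V) [DecidableRel G.Adj] (hreg : G.IsRegularOfDegree (2 * p))
    (A : V → V → Prop) (f : V → Fin (p + 2))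
    (hA : IsOrientation G A) (hf : IsProperColoring G f) :
    IsStarColoring G f ↔
      ∀ i j : Fin (p + 2), i ≠ j →
        ∀ C : (G.induce {v | f v = i ∨ f v = j}).ConnectedComponent,
          Nonempty ((G.induce {v | f v = i ∨ f v = j}).induce C.supp ≃g
            completeBipartiteGraph (Fin 1) (Fin p)) := by
  classical
  constructor
  · intro hstar i j hij C
    obtain ⟨h1, h3, h2⟩ := StarAux.key hp hreg hstar
    exact StarAux.comp_iso hp hf h1 h3
      (fun v jj w hdd hadj hw => StarAux.leaf_unique hstar hdd hadj hw) h2 i j hij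
      _ (fun y => Iff.rfl) C
  · intro h
    refine ⟨hf, ?_⟩
    intro a b c d hab hbc hcd hac hbd had
    rintro ⟨hfac, hfbd⟩
    have hij : f b ≠ f a := (hf hab).symm
    set S : Set V := {v | f v = f b ∨ f v = f a} with hS
    have haS : a ∈ S := Or.inr rfl
    have hbS : b ∈ S := Or.inl rfl
    have hcS : c ∈ S := Or.inr hfac.symm
    have hdS : d ∈ S := Or.inl hfbd.symm
    have hab' : (G.induce S).Adj ⟨a, haS⟩ ⟨b, hbS⟩ := hab
    have hbc' : (G.induce S).Adj ⟨b, hbS⟩ ⟨c, hcS⟩ := hbc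
    have hcd' : (G.induce S).Adj ⟨c, hcS⟩ ⟨d, hdS⟩ := hcd
    set C := (G.induce S).connectedComponentMk ⟨a, haS⟩ with hC
    have haC : (⟨a, haS⟩ : ↥S) ∈ C.supp := rfl
    have hbC : (⟨b, hbS⟩ : ↥S) ∈ C.supp :=
      (ConnectedComponent.sound hab'.symm.reachable)
    have hcC : (⟨c, hcS⟩ : ↥S) ∈ C.supp :=
      (ConnectedComponent.sound ((hbc'.symm.reachable).trans hab'.symm.reachable))
    have hdC : (⟨d, hdS⟩ : ↥S) ∈ C.supp :=
      (ConnectedComponent.sound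
        (((hcd'.symm.reachable).trans hbc'.symm.reachable).trans hab'.symm.reachable))
    obtain ⟨g⟩ := h (f b) (f a) hij C
    set xa : ↥C.supp := ⟨⟨a, haS⟩, haC⟩
    set xb : ↥C.supp := ⟨⟨b, hbS⟩, hbC⟩
    set xc : ↥C.supp := ⟨⟨c, hcS⟩, hcC⟩
    set xd : ↥C.supp := ⟨⟨d, hdS⟩, hdC⟩
    have hAB : (completeBipartiteGraph (Fin 1) (Fin p)).Adj (g xa) (g xb) :=
      g.map_rel_iff.mpr hab
    have hBC : (completeBipartiteGraph (Fin 1) (Fin p)).Adj (g xb) (g xc) :=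
      g.map_rel_iff.mpr hbc
    have hCD : (completeBipartiteGraph (Fin 1) (Fin p)).Adj (g xc) (g xd) :=
      g.map_rel_iff.mpr hcd
    have hinj := g.toEquiv.injective
    rcases hA : g xa with za | ka <;> rcases hB : g xb with zb | kb
    · rw [hA, hB] at hAB
      simp at hAB
    · -- a is the centre : look at c
      rcases hCc : g xc with zc | kc
      · -- g xa = g xc
        have : g xa = g xc := by
          rw [hA, hCc]
          exact congrArg Sum.inl (Subsingleton.elim _ _)
        have hxac : xa = xc := hinj this
        exact hac (Subtype.ext_iff.mp (Subtype.ext_iff.mp hxac))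
      · rw [hB, hCc] at hBC
        simp at hBC
    · -- b is the centre : look at d
      rcases hCc : g xc with zc | kc
      · rw [hB, hCc] at hBC
        simp at hBC
      · rcases hD : g xd with zd | kd
        · have : g xb = g xd := by
            rw [hB, hD]
            exact congrArg Sum.inl (Subsingleton.elim _ _)
          have hxbd : xb = xd := hinj this
          exact hbd (Subtype.ext_iff.mp (Subtype.ext_iff.mp hxbd))
        · rw [hCc, hD] at hCD
          simp at hCD
    · rw [hA, hB] at hAB
      simp at hAB
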